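/- arXiv:1304.2338 — 3 statements merged into one kernel-verified Lean document; each statement's English description precedes it below -/
import Mathlib

section
/- Non-Euclidean gradient descent convergence: Let f : R^n → R be convex, continuously differentiable, with gradient L-Lipschitz with respect to a norm ‖·‖ (in the dual-norm sense). Let X* be the nonempty set of minimizers with optimal value f*, and define the iteration x_{k+1} = x_k − (1/L)·(∇f(x_k))#. Then for all k ≥ 0, f(x_k) − f* ≤ 2·L·R²/(k+4), where R = max over x with f(x) ≤ f(x_0) of min over x* ∈ X* of ‖x − x*‖. -/
open scoped RealInnerProductSpace

theorem stmt7 {n : ℕ}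
    (N Nd : EuclideanSpace ℝ (Fin n) → ℝ)
    (hN0 : ∀ x, N x = 0 ↔ x = 0)
    (hNh : ∀ (c : ℝ) (x : EuclideanSpace ℝ (Fin n)), N (c • x) = |c| * N x)
    (hNt : ∀ x y, N (x + y) ≤ N x + N y)
    (hNd : ∀ z, IsGreatest {v : ℝ | ∃ w, N w ≤ 1 ∧ v = ⟪z, w⟫} (Nd z))
    (sharp : EuclideanSpace ℝ (Fin n) → EuclideanSpace ℝ (Fin n))
    (hsharp : ∀ z s, ⟪z, s⟫ - N s ^ 2 / 2 ≤ ⟪z, sharp z⟫ - N (sharp z) ^ 2 / 2)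
    (f : EuclideanSpace ℝ (Fin n) → ℝ)
    (f' : EuclideanSpace ℝ (Fin n) → EuclideanSpace ℝ (Fin n))
    (hconv : ConvexOn ℝ Set.univ f)
    (hgrad : ∀ x, HasGradientAt f (f' x) x)
    (hcont : Continuous f')
    (L : ℝ) (hL : 0 < L)
    (hLip : ∀ x y, Nd (f' x - f' y) ≤ L * N (x - y))
    (xstar : EuclideanSpace ℝ (Fin n)) (hxstar : IsMinOn f Set.univ xstar)
    (fstar : ℝ) (hfstar : fstar = f xstar)
    (x : ℕ → EuclideanSpace ℝ (Fin n))
    (hx : ∀ k, x (k + 1) = x k - (1 / L) • sharp (f' (x k)))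
    (R : ℝ)
    (hR : ∀ z, f z ≤ f (x 0) →
      ∃ xs, IsMinOn f Set.univ xs ∧ N (z - xs) ≤ R) :
    ∀ k : ℕ, f (x k) - fstar ≤ 2 * L * R ^ 2 / ((k : ℝ) + 4) := by
  have hN0' : N 0 = 0 := (hN0 0).mpr rfl
  have hNneg : ∀ z, N (-z) = N z := by
    intro z; simpa using hNh (-1) z
  have hNnn : ∀ z, 0 ≤ N z := by
    intro z
    have h := hNt z (-z)
    rw [add_neg_cancel, hN0', hNneg] at h
    linarith
  have hNdnn : ∀ z, 0 ≤ Nd z := by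
    intro z
    exact (hNd z).2 ⟨0, by simp [hN0'], by simp⟩
  have hdual : ∀ u z, ⟪u, z⟫ ≤ Nd u * N z := by
    intro u z
    rcases eq_or_ne z 0 with hz | hz
    · simp [hz, hN0']
    · have hNz : 0 < N z :=
        lt_of_le_of_ne (hNnn z) (fun h => hz ((hN0 z).mp h.symm))
      have hmem : ⟪u, (N z)⁻¹ • z⟫ ≤ Nd u := by
        refine (hNd u).2 ⟨(N z)⁻¹ • z, ?_, rfl⟩
        rw [hNh, abs_of_pos (inv_pos.mpr hNz), inv_mul_cancel₀ hNz.ne']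
      rw [real_inner_smul_right] at hmem
      have h2 := mul_le_mul_of_nonneg_left hmem hNz.le
      calc ⟪u, z⟫ = N z * ((N z)⁻¹ * ⟪u, z⟫) := by
            field_simp
        _ ≤ N z * Nd u := h2
        _ = Nd u * N z := mul_comm _ _
  -- derivative along a line
  have hline : ∀ (a d : EuclideanSpace ℝ (Fin n)) (t : ℝ),
      HasDerivAt (fun t : ℝ => f (a + t • d)) ⟪f' (a + t • d), d⟫ t := by
    intro a d t
    have h1 : HasDerivAt (fun t : ℝ => a + t • d) d t := by
      simpa using ((hasDerivAt_id t).smul_const d).const_add a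
    have h2 := (hgrad (a + t • d)).hasFDerivAt
    have h3 := h2.comp_hasDerivAt t h1
    simp [InnerProductSpace.toDual_apply_apply] at h3
    exact h3
  -- descent lemma
  have hdesc : ∀ a b, f b ≤ f a + ⟪f' a, b - a⟫ + L / 2 * N (b - a) ^ 2 := by
    intro a b
    set d := b - a with hd
    have hab : a + d = b := by rw [hd]; abel
    set φ : ℝ → ℝ :=
      fun t => f (a + t • d) - t * ⟪f' a, d⟫ - L * N d ^ 2 / 2 * t ^ 2 with hφ
    have hφd : ∀ t, HasDerivAt φ
        (⟪f' (a + t • d), d⟫ - ⟪f' a, d⟫ - L * N d ^ 2 * t) t := by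
      intro t
      have h1 := hline a d t
      have h2 : HasDerivAt (fun t : ℝ => t * ⟪f' a, d⟫) ⟪f' a, d⟫ t := by
        simpa using (hasDerivAt_id t).mul_const ⟪f' a, d⟫
      have h3 : HasDerivAt (fun t : ℝ => L * N d ^ 2 / 2 * t ^ 2)
          (L * N d ^ 2 * t) t := by
        have h := (hasDerivAt_pow 2 t).const_mul (L * N d ^ 2 / 2)
        refine h.congr_deriv ?_
        push_cast
        ring
      exact (h1.sub h2).sub h3
    have hmono : AntitoneOn φ (Set.Icc (0:ℝ) 1) := by
      apply antitoneOn_of_deriv_nonpos (convex_Icc 0 1)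
      · exact fun t _ => ((hφd t).differentiableAt.continuousAt).continuousWithinAt
      · intro t _
        exact ((hφd t).differentiableAt).differentiableWithinAt
      · intro t ht
        rw [interior_Icc] at ht
        rw [(hφd t).deriv]
        have h4 : ⟪f' (a + t • d) - f' a, d⟫
            ≤ Nd (f' (a + t • d) - f' a) * N d := hdual _ _
        have h5 := hLip (a + t • d) a
        have h6 : N (a + t • d - a) = t * N d := by
          rw [add_sub_cancel_left, hNh, abs_of_pos ht.1]
        rw [h6] at h5
        rw [inner_sub_left] at h4
        have h7 := mul_le_mul_of_nonneg_right h5 (hNnn d)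
        nlinarith [hNnn d]
    have h8 := hmono (Set.left_mem_Icc.mpr zero_le_one)
      (Set.right_mem_Icc.mpr zero_le_one) zero_le_one
    have hφ0 : φ 0 = f a := by simp [hφ]
    have hφ1 : φ 1 = f b - ⟪f' a, d⟫ - L * N d ^ 2 / 2 := by
      simp [hφ, hab]
    rw [hφ0, hφ1] at h8
    linarith
  -- convexity lower bound
  have hlower : ∀ a b, f a + ⟪f' a, b - a⟫ ≤ f b := by
    intro a b
    set d := b - a with hd
    have hab : a + d = b := by rw [hd]; abel
    have hψ : ConvexOn ℝ Set.univ (fun t : ℝ => f (a + t • d)) := by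
      have h := hconv.comp_affineMap (AffineMap.lineMap a b)
      simp only [Set.preimage_univ] at h
      rw [show (fun t : ℝ => f (a + t • d)) = f ∘ AffineMap.lineMap a b from ?_]
      · exact h
      funext t
      simp [AffineMap.lineMap_apply, hd, Function.comp]
      congr 1
      abel
    have hderiv := hline a d 0
    rw [zero_smul, add_zero] at hderiv
    have hslope := hψ.le_slope_of_hasDerivAt (Set.mem_univ (0:ℝ))
      (Set.mem_univ (1:ℝ)) zero_lt_one hderiv
    rw [slope_def_field] at hslope
    simp only [one_smul, zero_smul, add_zero, hab, sub_zero, div_one] at hslope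
    linarith
  -- minimizers all have value fstar
  have hminval : ∀ xs, IsMinOn f Set.univ xs → f xs = fstar := by
    intro xs h
    have h1 := isMinOn_iff.mp h xstar (Set.mem_univ _)
    have h2 := isMinOn_iff.mp hxstar xs (Set.mem_univ _)
    rw [hfstar]; linarith
  -- gradient vanishes at minimizers
  have hgradmin : ∀ xs, IsMinOn f Set.univ xs → f' xs = 0 := by
    intro xs h
    have hloc : IsLocalMin f xs :=
      Filter.Eventually.of_forall fun y => isMinOn_iff.mp h y (Set.mem_univ _)
    have h0 := hloc.hasFDerivAt_eq_zero (hgrad xs).hasFDerivAt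
    have h1 := congrArg (InnerProductSpace.toDual ℝ (EuclideanSpace ℝ (Fin n))).symm h0
    simpa using h1
  -- one-step decrease
  have hstep : ∀ k, f (x (k + 1)) ≤ f (x k) - Nd (f' (x k)) ^ 2 / (2 * L) := by
    intro k
    set g := f' (x k) with hg
    set s := sharp g with hs
    have hsh : Nd g ^ 2 / 2 ≤ ⟪g, s⟫ - N s ^ 2 / 2 := by
      obtain ⟨w, hw1, hw2⟩ := (hNd g).1
      have h1 := hsharp g (Nd g • w)
      rw [real_inner_smul_right, hNh, abs_of_nonneg (hNdnn g), ← hw2] at h1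
      nlinarith [hNdnn g, hNnn w,
        mul_nonneg (sub_nonneg.2 hw1) (by linarith [hNnn w] : (0:ℝ) ≤ 1 + N w),
        sq_nonneg (Nd g)]
    have hxk : x (k + 1) - x k = -((1 / L) • s) := by
      rw [hx k]; abel
    have hd1 := hdesc (x k) (x (k + 1))
    rw [hxk, inner_neg_right, real_inner_smul_right, hNneg, hNh,
      abs_of_pos (div_pos one_pos hL)] at hd1
    have e1 : L / 2 * (1 / L * N s) ^ 2 = 1 / L * (N s ^ 2 / 2) := by
      field_simp
    rw [e1] at hd1
    have h2 := mul_le_mul_of_nonneg_left hsh (le_of_lt (div_pos one_pos hL))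
    rw [mul_sub] at h2
    have e2 : 1 / L * (Nd g ^ 2 / 2) = Nd g ^ 2 / (2 * L) := by
      rw [div_mul_div_comm, one_mul, mul_comm L 2]
    rw [e2] at h2
    linarith
  -- decreasing values
  have hmono : ∀ k, f (x k) ≤ f (x 0) := by
    intro k
    induction k with
    | zero => exact le_refl _
    | succ k ih =>
      have h1 := hstep k
      have h2 : 0 ≤ Nd (f' (x k)) ^ 2 / (2 * L) :=
        div_nonneg (sq_nonneg _) (by linarith)
      linarith
  have hminsel : ∀ k, ∃ xs, IsMinOn f Set.univ xs ∧ N (x k - xs) ≤ R :=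
    fun k => hR _ (hmono k)
  have hRnn : 0 ≤ R := by
    obtain ⟨xs, _, h⟩ := hminsel 0
    exact le_trans (hNnn _) h
  have hΔnn : ∀ k, 0 ≤ f (x k) - fstar := by
    intro k
    have := isMinOn_iff.mp hxstar (x k) (Set.mem_univ _)
    rw [hfstar]; linarith
  have hbound : ∀ k, f (x k) - fstar ≤ Nd (f' (x k)) * R := by
    intro k
    obtain ⟨xs, hxs, hxsR⟩ := hminsel k
    have h1 := hlower (x k) xs
    have h2 := hdual (f' (x k)) (x k - xs)
    have h3 : ⟪f' (x k), xs - x k⟫ = -⟪f' (x k), x k - xs⟫ := by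
      rw [← inner_neg_right]
      congr 1
      abel
    have h4 := hminval xs hxs
    have h5 := mul_le_mul_of_nonneg_left hxsR (hNdnn (f' (x k)))
    rw [h3] at h1
    linarith
  have hinit : f (x 0) - fstar ≤ L * R ^ 2 / 2 := by
    obtain ⟨xs, hxs, hxsR⟩ := hminsel 0
    have h1 := hdesc xs (x 0)
    rw [hgradmin xs hxs] at h1
    simp only [inner_zero_left] at h1
    have h2 : N (x 0 - xs) ^ 2 ≤ R ^ 2 := by nlinarith [hNnn (x 0 - xs)]
    have h4 := hminval xs hxs
    nlinarith [hL]
  have hkey : ∀ a A K : ℝ, 0 ≤ a → a * K ≤ A → 4 ≤ K → 0 < A →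
      a - a ^ 2 / A ≤ A / (K + 1) := by
    intro a A K ha haK hK hA
    have haA : a ≤ A := by nlinarith
    have h1 : a - a ^ 2 / A = (a * A - a ^ 2) / A := by field_simp
    rw [h1, div_le_div_iff₀ hA (by linarith : (0:ℝ) < K + 1)]
    nlinarith [mul_nonneg (sub_nonneg.2 haK) (sub_nonneg.2 haA), sq_nonneg a]
  rcases eq_or_lt_of_le hRnn with hR0 | hRpos
  · intro k
    have h1 := hmono k
    have h2 := hinit
    have h3 : 2 * L * R ^ 2 / ((k:ℝ) + 4) = 0 := by rw [← hR0]; simp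
    have h4 : L * R ^ 2 / 2 = 0 := by rw [← hR0]; simp
    rw [h3]
    rw [h4] at h2
    linarith
  · intro k
    induction k with
    | zero =>
      calc f (x 0) - fstar ≤ L * R ^ 2 / 2 := hinit
        _ = 2 * L * R ^ 2 / (((0:ℕ):ℝ) + 4) := by push_cast; ring
    | succ k ih =>
      have hApos : 0 < 2 * L * R ^ 2 :=
        mul_pos (mul_pos (by norm_num) hL) (pow_pos hRpos 2)
      have hKpos : (0:ℝ) < (k:ℝ) + 4 := by positivity
      have haK : (f (x k) - fstar) * ((k:ℝ) + 4) ≤ 2 * L * R ^ 2 :=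
        (le_div_iff₀ hKpos).mp ih
      have hkey' := hkey (f (x k) - fstar) (2 * L * R ^ 2) ((k:ℝ) + 4)
        (hΔnn k) haK (by linarith [(Nat.cast_nonneg k : (0:ℝ) ≤ k)]) hApos
      have hsq : (f (x k) - fstar) ^ 2 ≤ Nd (f' (x k)) ^ 2 * R ^ 2 := by
        nlinarith [hbound k, hΔnn k, mul_nonneg (hNdnn (f' (x k))) hRnn]
      have e : Nd (f' (x k)) ^ 2 / (2 * L)
          = Nd (f' (x k)) ^ 2 * R ^ 2 / (2 * L * R ^ 2) := by
        rw [eq_div_iff (ne_of_gt hApos)]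
        field_simp
      have hdiv : (f (x k) - fstar) ^ 2 / (2 * L * R ^ 2)
          ≤ Nd (f' (x k)) ^ 2 / (2 * L) := by
        rw [e]
        exact (div_le_div_iff_of_pos_right hApos).mpr hsq
      have hfin := hstep k
      calc f (x (k + 1)) - fstar
          ≤ (f (x k) - fstar) - (f (x k) - fstar) ^ 2 / (2 * L * R ^ 2) := by
            linarith
        _ ≤ 2 * L * R ^ 2 / (((k:ℝ) + 4) + 1) := hkey'
        _ = 2 * L * R ^ 2 / ((↑(k + 1):ℝ) + 4) := by push_cast; ring
end

section
/- The function smax_t is convex, and its gradient is Lipschitz continuous with constant 1/t with respect to the infinity norm: for all x,y ∈ R^m, ‖∇smax_t(x) − ∇smax_t(y)‖₁ ≤ (1/t)·‖x−y‖∞. Equivalently, its Hessian satisfies 0 ≤ yᵀ(∇²smax_t(x))y ≤ (1/t)‖y‖∞² for all x,y. -/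
private lemma covbound {ι : Type*} [Fintype ι] [Nonempty ι] (W c d : ι → ℝ) (K : ℝ) (hK : 0 ≤ K)
    (hW : ∀ j, 0 < W j) (hc : ∀ j, |c j| ≤ 1) (hd : ∀ j, |d j| ≤ K) :
    |(∑ j, W j * (c j * d j)) * (∑ j, W j) - (∑ j, W j * c j) * (∑ j, W j * d j)|
      ≤ K * (∑ j, W j) ^ 2 := by
  have hD : 0 < ∑ j, W j := Finset.sum_pos (fun j _ => hW j) Finset.univ_nonempty
  set D := ∑ j, W j with hDdef
  obtain ⟨μ, hμ⟩ : ∃ μ, ∑ j, W j * c j = μ * D := ⟨_, (div_mul_cancel₀ _ hD.ne').symm⟩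
  obtain ⟨ν, hν⟩ : ∃ ν, ∑ j, W j * d j = ν * D := ⟨_, (div_mul_cancel₀ _ hD.ne').symm⟩
  have hid : ∑ j, W j * ((c j - μ) * (d j - ν)) = (∑ j, W j * (c j * d j)) - μ * ν * D := by
    have h1 : ∀ j, W j * ((c j - μ) * (d j - ν))
        = W j * (c j * d j) - ν * (W j * c j) - μ * (W j * d j) + (μ * ν) * W j :=
      fun j => by ring
    rw [Finset.sum_congr rfl fun j _ => h1 j]
    simp only [Finset.sum_add_distrib, Finset.sum_sub_distrib, ← Finset.mul_sum]
    rw [hμ, hν, ← hDdef]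
    ring
  have hcs : (∑ j, W j * ((c j - μ) * (d j - ν))) ^ 2
      ≤ (∑ j, W j * (c j - μ) ^ 2) * ∑ j, W j * (d j - ν) ^ 2 :=
    Finset.sum_sq_le_sum_mul_sum_of_sq_eq_mul _ (fun j _ => mul_nonneg (hW j).le (sq_nonneg _))
      (fun j _ => mul_nonneg (hW j).le (sq_nonneg _)) (fun j _ => by ring)
  have hb1 : ∑ j, W j * (c j - μ) ^ 2 ≤ D := by
    have e1 : ∑ j, W j * (c j - μ) ^ 2 = (∑ j, W j * c j ^ 2) - μ ^ 2 * D := by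
      have h1 : ∀ j, W j * (c j - μ) ^ 2
          = W j * c j ^ 2 - 2 * μ * (W j * c j) + μ ^ 2 * W j := fun j => by ring
      rw [Finset.sum_congr rfl fun j _ => h1 j]
      simp only [Finset.sum_add_distrib, Finset.sum_sub_distrib, ← Finset.mul_sum]
      rw [hμ, ← hDdef]
      ring
    have e2 : ∑ j, W j * c j ^ 2 ≤ D := by
      rw [hDdef]
      refine Finset.sum_le_sum fun j _ => ?_
      have h1 : c j ^ 2 ≤ 1 := by nlinarith [abs_le.1 (hc j)]
      exact mul_le_of_le_one_right (hW j).le h1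
    nlinarith [sq_nonneg μ, hD]
  have hb2 : ∑ j, W j * (d j - ν) ^ 2 ≤ K ^ 2 * D := by
    have e1 : ∑ j, W j * (d j - ν) ^ 2 = (∑ j, W j * d j ^ 2) - ν ^ 2 * D := by
      have h1 : ∀ j, W j * (d j - ν) ^ 2
          = W j * d j ^ 2 - 2 * ν * (W j * d j) + ν ^ 2 * W j := fun j => by ring
      rw [Finset.sum_congr rfl fun j _ => h1 j]
      simp only [Finset.sum_add_distrib, Finset.sum_sub_distrib, ← Finset.mul_sum]
      rw [hν, ← hDdef]
      ring
    have e2 : ∑ j, W j * d j ^ 2 ≤ K ^ 2 * D := by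
      rw [hDdef, Finset.mul_sum]
      refine Finset.sum_le_sum fun j _ => ?_
      have h1 : d j ^ 2 ≤ K ^ 2 := by nlinarith [abs_le.1 (hd j)]
      nlinarith [hW j, h1]
    nlinarith [sq_nonneg ν, hD]
  set X := ∑ j, W j * ((c j - μ) * (d j - ν)) with hXdef
  have hsum1 : 0 ≤ ∑ j, W j * (c j - μ) ^ 2 :=
    Finset.sum_nonneg fun j _ => mul_nonneg (hW j).le (sq_nonneg _)
  have hsum2 : 0 ≤ ∑ j, W j * (d j - ν) ^ 2 :=
    Finset.sum_nonneg fun j _ => mul_nonneg (hW j).le (sq_nonneg _)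
  have hX2 : X ^ 2 ≤ (K * D) ^ 2 := by
    nlinarith [hcs, hb1, hb2, hsum1, hsum2, hD.le, hK]
  have hXle : |X| ≤ K * D := by
    nlinarith [sq_abs X, abs_nonneg X, mul_nonneg hK hD.le, hX2]
  have hrw : (∑ j, W j * (c j * d j)) * D - (∑ j, W j * c j) * (∑ j, W j * d j) = X * D := by
    rw [hμ, hν]
    rw [hid]
    ring
  rw [hrw, abs_mul, abs_of_pos hD]
  nlinarith [mul_le_mul_of_nonneg_right hXle hD.le]

private lemma base_deriv (t : ℝ) (w u : ℝ) (s : ℝ) :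
    HasDerivAt (fun s : ℝ => (w + s * u) / t) (u / t) s :=
  ((hasDerivAt_mul_const u).const_add w).div_const t

private lemma base_deriv_neg (t : ℝ) (w u : ℝ) (s : ℝ) :
    HasDerivAt (fun s : ℝ => -(w + s * u) / t) (-u / t) s :=
  (((hasDerivAt_mul_const u).const_add w).neg).div_const t

private lemma deriv_diff {m : ℕ} (t : ℝ) (w u ε : Fin m → ℝ) (s : ℝ) :
    HasDerivAt
      (fun s : ℝ => ∑ e, ε e * (Real.exp ((w e + s * u e) / t) - Real.exp (-(w e + s * u e) / t)))
      (∑ e, ε e * (u e / t) *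
        (Real.exp ((w e + s * u e) / t) + Real.exp (-(w e + s * u e) / t))) s := by
  have term : ∀ e : Fin m, HasDerivAt
      (fun s : ℝ => ε e * (Real.exp ((w e + s * u e) / t) - Real.exp (-(w e + s * u e) / t)))
      (ε e * (Real.exp ((w e + s * u e) / t) * (u e / t)
        - Real.exp (-(w e + s * u e) / t) * (-u e / t))) s :=
    fun e => (((base_deriv t (w e) (u e) s).exp).sub ((base_deriv_neg t (w e) (u e) s).exp)).const_mul (ε e)
  have := HasDerivAt.fun_sum (fun e (_ : e ∈ Finset.univ) => term e)
  refine this.congr_deriv (Eq.symm ?_)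
  exact Finset.sum_congr rfl fun e _ => by ring

private lemma derivSumAux {m : ℕ} (t : ℝ) (w u : Fin m → ℝ) (s : ℝ) :
    HasDerivAt
      (fun s : ℝ => ∑ e, (Real.exp ((w e + s * u e) / t) + Real.exp (-(w e + s * u e) / t)))
      (∑ e, (u e / t) *
        (Real.exp ((w e + s * u e) / t) - Real.exp (-(w e + s * u e) / t))) s := by
  have term : ∀ e : Fin m, HasDerivAt
      (fun s : ℝ => Real.exp ((w e + s * u e) / t) + Real.exp (-(w e + s * u e) / t))
      (Real.exp ((w e + s * u e) / t) * (u e / t)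
        + Real.exp (-(w e + s * u e) / t) * (-u e / t)) s :=
    fun e => ((base_deriv t (w e) (u e) s).exp).add ((base_deriv_neg t (w e) (u e) s).exp)
  have := HasDerivAt.fun_sum (fun e (_ : e ∈ Finset.univ) => term e)
  refine this.congr_deriv (Eq.symm ?_)
  exact Finset.sum_congr rfl fun e _ => by ring

private noncomputable def Nfun (t : ℝ) {m : ℕ} (w u ε : Fin m → ℝ) (s : ℝ) : ℝ :=
  ∑ e, ε e * (Real.exp ((w e + s * u e) / t) - Real.exp (-(w e + s * u e) / t))

private noncomputable def Dfun (t : ℝ) {m : ℕ} (w u : Fin m → ℝ) (s : ℝ) : ℝ :=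
  ∑ e, (Real.exp ((w e + s * u e) / t) + Real.exp (-(w e + s * u e) / t))

private noncomputable def Nfun' (t : ℝ) {m : ℕ} (w u ε : Fin m → ℝ) (s : ℝ) : ℝ :=
  ∑ e, ε e * (u e / t) * (Real.exp ((w e + s * u e) / t) + Real.exp (-(w e + s * u e) / t))

private noncomputable def Dfun' (t : ℝ) {m : ℕ} (w u : Fin m → ℝ) (s : ℝ) : ℝ :=
  ∑ e, (u e / t) * (Real.exp ((w e + s * u e) / t) - Real.exp (-(w e + s * u e) / t))

private lemma Dfun_pos {m : ℕ} (hm : 0 < m) (t : ℝ) (w u : Fin m → ℝ) (s : ℝ) :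
    0 < Dfun t w u s := by
  haveI : Nonempty (Fin m) := Fin.pos_iff_nonempty.mp hm
  exact Finset.sum_pos (fun e _ => by positivity) Finset.univ_nonempty

private lemma lipkey {m : ℕ} (hm : 0 < m) {t : ℝ} (ht : 0 < t) (w u ε : Fin m → ℝ)
    (hε1 : ∀ e, |ε e| ≤ 1) (K : ℝ) (hK : 0 ≤ K) (hu : ∀ e, |u e / t| ≤ K) :
    Nfun t w u ε 1 / Dfun t w u 1 - Nfun t w u ε 0 / Dfun t w u 0 ≤ K := by
  haveI : Nonempty (Fin m) := Fin.pos_iff_nonempty.mp hm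
  have hD := Dfun_pos hm t w u
  have hderivN : ∀ s, HasDerivAt (Nfun t w u ε) (Nfun' t w u ε s) s := fun s => deriv_diff t w u ε s
  have hderivD : ∀ s, HasDerivAt (Dfun t w u) (Dfun' t w u s) s := fun s => derivSumAux t w u s
  have hh : ∀ s : ℝ, HasDerivAt (fun s => Nfun t w u ε s / Dfun t w u s)
      ((Nfun' t w u ε s * Dfun t w u s - Nfun t w u ε s * Dfun' t w u s) / (Dfun t w u s) ^ 2) s :=
    fun s => (hderivN s).div (hderivD s) (hD s).ne'
  obtain ⟨ξ, _, hξ⟩ := exists_hasDerivAt_eq_slope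
    (fun s => Nfun t w u ε s / Dfun t w u s)
    (fun s => (Nfun' t w u ε s * Dfun t w u s - Nfun t w u ε s * Dfun' t w u s) / (Dfun t w u s) ^ 2)
    zero_lt_one (fun s _ => ((hh s).continuousAt).continuousWithinAt) (fun s _ => hh s)
  rw [sub_zero, div_one] at hξ
  rw [← hξ]
  -- now bound the derivative at ξ
  have hWpos : ∀ j : Fin m × Bool, (0:ℝ) < (if j.2 then Real.exp ((w j.1 + ξ * u j.1) / t)
      else Real.exp (-(w j.1 + ξ * u j.1) / t)) := by
    intro j; split <;> positivity
  have hcabs : ∀ j : Fin m × Bool, |if j.2 then ε j.1 else -ε j.1| ≤ 1 := by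
    intro j
    split
    · exact hε1 j.1
    · rw [abs_neg]; exact hε1 j.1
  have hdabs : ∀ j : Fin m × Bool, |if j.2 then u j.1 / t else -(u j.1 / t)| ≤ K := by
    intro j
    split
    · exact hu j.1
    · rw [abs_neg]; exact hu j.1
  have hcov := covbound (ι := Fin m × Bool)
    (fun j => if j.2 then Real.exp ((w j.1 + ξ * u j.1) / t)
      else Real.exp (-(w j.1 + ξ * u j.1) / t))
    (fun j => if j.2 then ε j.1 else -ε j.1)
    (fun j => if j.2 then u j.1 / t else -(u j.1 / t))
    K hK hWpos hcabs hdabs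
  have eD : (∑ j : Fin m × Bool, (if j.2 then Real.exp ((w j.1 + ξ * u j.1) / t)
      else Real.exp (-(w j.1 + ξ * u j.1) / t))) = Dfun t w u ξ := by
    rw [Fintype.sum_prod_type, Dfun]
    refine Finset.sum_congr rfl fun e _ => ?_
    rw [Fintype.sum_bool]
    simp
  have eN : (∑ j : Fin m × Bool, (if j.2 then Real.exp ((w j.1 + ξ * u j.1) / t)
      else Real.exp (-(w j.1 + ξ * u j.1) / t)) * (if j.2 then ε j.1 else -ε j.1))
      = Nfun t w u ε ξ := by
    rw [Fintype.sum_prod_type, Nfun]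
    refine Finset.sum_congr rfl fun e _ => ?_
    rw [Fintype.sum_bool]
    norm_num
    ring
  have eD' : (∑ j : Fin m × Bool, (if j.2 then Real.exp ((w j.1 + ξ * u j.1) / t)
      else Real.exp (-(w j.1 + ξ * u j.1) / t)) * (if j.2 then u j.1 / t else -(u j.1 / t)))
      = Dfun' t w u ξ := by
    rw [Fintype.sum_prod_type, Dfun']
    refine Finset.sum_congr rfl fun e _ => ?_
    rw [Fintype.sum_bool]
    norm_num
    ring
  have eN' : (∑ j : Fin m × Bool, (if j.2 then Real.exp ((w j.1 + ξ * u j.1) / t)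
      else Real.exp (-(w j.1 + ξ * u j.1) / t)) *
        ((if j.2 then ε j.1 else -ε j.1) * (if j.2 then u j.1 / t else -(u j.1 / t))))
      = Nfun' t w u ε ξ := by
    rw [Fintype.sum_prod_type, Nfun']
    refine Finset.sum_congr rfl fun e _ => ?_
    rw [Fintype.sum_bool]
    norm_num
    ring
  rw [eD, eN, eD', eN'] at hcov
  have habs : |(Nfun' t w u ε ξ * Dfun t w u ξ - Nfun t w u ε ξ * Dfun' t w u ξ)
      / (Dfun t w u ξ) ^ 2| ≤ K := by
    rw [abs_div, abs_of_pos (pow_pos (hD ξ) 2)]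
    rw [div_le_iff₀ (pow_pos (hD ξ) 2)]
    calc |Nfun' t w u ε ξ * Dfun t w u ξ - Nfun t w u ε ξ * Dfun' t w u ξ|
        ≤ K * (Dfun t w u ξ) ^ 2 := hcov
      _ = K * (Dfun t w u ξ) ^ 2 := rfl
  exact le_trans (le_abs_self _) habs

theorem stmt12 {m : ℕ} (t : ℝ) (ht : 0 < t)
    (smax : (Fin m → ℝ) → ℝ)
    (hsmax : ∀ z, smax z =
      t * Real.log ((∑ e, (Real.exp (z e / t) + Real.exp (-z e / t))) / (2 * m)))
    (g : (Fin m → ℝ) → Fin m → ℝ)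
    (hg : ∀ z e, g z e = (Real.exp (z e / t) - Real.exp (-z e / t)) /
      ∑ e', (Real.exp (z e' / t) + Real.exp (-z e' / t))) :
    ConvexOn ℝ Set.univ smax ∧
    (∀ z v : Fin m → ℝ,
      HasDerivAt (fun τ : ℝ => smax (z + τ • v)) (∑ e, g z e * v e) 0) ∧
    (∀ z w : Fin m → ℝ, ∑ e, |g z e - g w e| ≤ (1 / t) * ‖z - w‖) := by
  rcases Nat.eq_zero_or_pos m with hm | hm
  · -- degenerate case m = 0
    subst hm
    refine ⟨⟨convex_univ, ?_⟩, ?_, ?_⟩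
    · intro x _ y _ a b ha hb hab
      simp [hsmax]
    · intro z v
      have hconst : (fun τ : ℝ => smax (z + τ • v)) = fun _ => 0 := funext fun τ => by
        simp [hsmax]
      rw [hconst]
      simpa using hasDerivAt_const (0:ℝ) (0:ℝ)
    · intro z w
      simp
      positivity
  · haveI : Nonempty (Fin m) := Fin.pos_iff_nonempty.mp hm
    have hmR : (0:ℝ) < (m:ℝ) := Nat.cast_pos.mpr hm
    have h2m : (0:ℝ) < 2 * (m:ℝ) := by linarith
    have hSpos : ∀ x : Fin m → ℝ, 0 < ∑ e, (Real.exp (x e / t) + Real.exp (-x e / t)) :=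
      fun x => Finset.sum_pos (fun e _ => by positivity) Finset.univ_nonempty
    refine ⟨⟨convex_univ, ?_⟩, ?_, ?_⟩
    · -- convexity
      intro x _ y _ a b ha hb hab
      simp only [hsmax, Pi.add_apply, Pi.smul_apply, smul_eq_mul]
      have hA := hSpos x
      have hB := hSpos y
      have hABpos : 0 < (∑ e, (Real.exp (x e / t) + Real.exp (-x e / t))) ^ a *
          (∑ e, (Real.exp (y e / t) + Real.exp (-y e / t))) ^ b := by
        apply mul_pos <;> exact Real.rpow_pos_of_pos (by assumption) _
      have key : (∑ e, (Real.exp ((a * x e + b * y e) / t) + Real.exp (-(a * x e + b * y e) / t)))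
          ≤ (∑ e, (Real.exp (x e / t) + Real.exp (-x e / t))) ^ a *
            (∑ e, (Real.exp (y e / t) + Real.exp (-y e / t))) ^ b := by
        rw [← div_le_one hABpos, Finset.sum_div]
        calc ∑ e, (Real.exp ((a * x e + b * y e) / t) + Real.exp (-(a * x e + b * y e) / t)) /
              ((∑ e, (Real.exp (x e / t) + Real.exp (-x e / t))) ^ a *
                (∑ e, (Real.exp (y e / t) + Real.exp (-y e / t))) ^ b)
            ≤ ∑ e, ((a / (∑ e', (Real.exp (x e' / t) + Real.exp (-x e' / t)))) *
                  (Real.exp (x e / t) + Real.exp (-x e / t)) +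
                (b / (∑ e', (Real.exp (y e' / t) + Real.exp (-y e' / t)))) *
                  (Real.exp (y e / t) + Real.exp (-y e / t))) := by
              refine Finset.sum_le_sum fun e _ => ?_
              have g1 : (Real.exp (x e / t) / (∑ e', (Real.exp (x e' / t) + Real.exp (-x e' / t)))) ^ a *
                  (Real.exp (y e / t) / (∑ e', (Real.exp (y e' / t) + Real.exp (-y e' / t)))) ^ b ≤
                  a * (Real.exp (x e / t) / (∑ e', (Real.exp (x e' / t) + Real.exp (-x e' / t)))) +
                  b * (Real.exp (y e / t) / (∑ e', (Real.exp (y e' / t) + Real.exp (-y e' / t)))) :=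
                Real.geom_mean_le_arith_mean2_weighted ha hb (by positivity) (by positivity) hab
              have g2 : (Real.exp (-x e / t) / (∑ e', (Real.exp (x e' / t) + Real.exp (-x e' / t)))) ^ a *
                  (Real.exp (-y e / t) / (∑ e', (Real.exp (y e' / t) + Real.exp (-y e' / t)))) ^ b ≤
                  a * (Real.exp (-x e / t) / (∑ e', (Real.exp (x e' / t) + Real.exp (-x e' / t)))) +
                  b * (Real.exp (-y e / t) / (∑ e', (Real.exp (y e' / t) + Real.exp (-y e' / t)))) :=
                Real.geom_mean_le_arith_mean2_weighted ha hb (by positivity) (by positivity) hab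
              have r1 : Real.exp ((a * x e + b * y e) / t) /
                  ((∑ e', (Real.exp (x e' / t) + Real.exp (-x e' / t))) ^ a *
                    (∑ e', (Real.exp (y e' / t) + Real.exp (-y e' / t))) ^ b)
                  = (Real.exp (x e / t) / (∑ e', (Real.exp (x e' / t) + Real.exp (-x e' / t)))) ^ a *
                    (Real.exp (y e / t) / (∑ e', (Real.exp (y e' / t) + Real.exp (-y e' / t)))) ^ b := by
                rw [Real.div_rpow (Real.exp_pos _).le hA.le,
                  Real.div_rpow (Real.exp_pos _).le hB.le, div_mul_div_comm]
                congr 1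
                rw [← Real.exp_mul, ← Real.exp_mul, ← Real.exp_add]
                congr 1
                ring
              have r2 : Real.exp (-(a * x e + b * y e) / t) /
                  ((∑ e', (Real.exp (x e' / t) + Real.exp (-x e' / t))) ^ a *
                    (∑ e', (Real.exp (y e' / t) + Real.exp (-y e' / t))) ^ b)
                  = (Real.exp (-x e / t) / (∑ e', (Real.exp (x e' / t) + Real.exp (-x e' / t)))) ^ a *
                    (Real.exp (-y e / t) / (∑ e', (Real.exp (y e' / t) + Real.exp (-y e' / t)))) ^ b := by
                rw [Real.div_rpow (Real.exp_pos _).le hA.le,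
                  Real.div_rpow (Real.exp_pos _).le hB.le, div_mul_div_comm]
                congr 1
                rw [← Real.exp_mul, ← Real.exp_mul, ← Real.exp_add]
                congr 1
                ring
              rw [add_div, r1, r2]
              have : a * (Real.exp (x e / t) / (∑ e', (Real.exp (x e' / t) + Real.exp (-x e' / t)))) +
                  b * (Real.exp (y e / t) / (∑ e', (Real.exp (y e' / t) + Real.exp (-y e' / t)))) +
                  (a * (Real.exp (-x e / t) / (∑ e', (Real.exp (x e' / t) + Real.exp (-x e' / t)))) +
                  b * (Real.exp (-y e / t) / (∑ e', (Real.exp (y e' / t) + Real.exp (-y e' / t)))))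
                  = (a / (∑ e', (Real.exp (x e' / t) + Real.exp (-x e' / t)))) *
                    (Real.exp (x e / t) + Real.exp (-x e / t)) +
                  (b / (∑ e', (Real.exp (y e' / t) + Real.exp (-y e' / t)))) *
                    (Real.exp (y e / t) + Real.exp (-y e / t)) := by ring
              linarith [g1, g2]
          _ = 1 := by
              rw [Finset.sum_add_distrib, ← Finset.mul_sum, ← Finset.mul_sum,
                div_mul_cancel₀ _ hA.ne', div_mul_cancel₀ _ hB.ne', hab]
      have l1 : Real.log ((∑ e, (Real.exp ((a * x e + b * y e) / t) +
            Real.exp (-(a * x e + b * y e) / t))) / (2 * m))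
          ≤ Real.log (((∑ e, (Real.exp (x e / t) + Real.exp (-x e / t))) ^ a *
            (∑ e, (Real.exp (y e / t) + Real.exp (-y e / t))) ^ b) / (2 * m)) := by
        apply Real.log_le_log (by positivity)
        gcongr
      have l2 : Real.log (((∑ e, (Real.exp (x e / t) + Real.exp (-x e / t))) ^ a *
            (∑ e, (Real.exp (y e / t) + Real.exp (-y e / t))) ^ b) / (2 * m))
          = a * Real.log ((∑ e, (Real.exp (x e / t) + Real.exp (-x e / t))) / (2 * m)) +
            b * Real.log ((∑ e, (Real.exp (y e / t) + Real.exp (-y e / t))) / (2 * m)) := by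
        rw [Real.log_div (by positivity) h2m.ne',
          Real.log_mul (Real.rpow_pos_of_pos hA a).ne' (Real.rpow_pos_of_pos hB b).ne',
          Real.log_rpow hA, Real.log_rpow hB,
          Real.log_div hA.ne' h2m.ne', Real.log_div hB.ne' h2m.ne']
        linear_combination Real.log (2 * (m:ℝ)) * hab
      calc t * Real.log ((∑ e, (Real.exp ((a * x e + b * y e) / t) +
              Real.exp (-(a * x e + b * y e) / t))) / (2 * m))
          ≤ t * Real.log (((∑ e, (Real.exp (x e / t) + Real.exp (-x e / t))) ^ a *
              (∑ e, (Real.exp (y e / t) + Real.exp (-y e / t))) ^ b) / (2 * m)) :=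
            mul_le_mul_of_nonneg_left l1 ht.le
        _ = a * (t * Real.log ((∑ e, (Real.exp (x e / t) + Real.exp (-x e / t))) / (2 * m))) +
            b * (t * Real.log ((∑ e, (Real.exp (y e / t) + Real.exp (-y e / t))) / (2 * m))) := by
            rw [l2]; ring
    · -- derivative
      intro z v
      have hfun : (fun τ : ℝ => smax (z + τ • v)) =
          fun τ => t * (Real.log (Dfun t z v τ) - Real.log (2 * m)) := by
        funext τ
        rw [hsmax]
        have harg : (∑ e, (Real.exp ((z + τ • v) e / t) + Real.exp (-(z + τ • v) e / t)))
            = Dfun t z v τ := by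
          simp only [Dfun]
          exact Finset.sum_congr rfl fun e _ => rfl
        rw [harg, Real.log_div (Dfun_pos hm t z v τ).ne' h2m.ne']
      rw [hfun]
      have hder := (((derivSumAux t z v 0).log (Dfun_pos hm t z v 0).ne').sub_const
        (Real.log (2 * m))).const_mul t
      refine hder.congr_deriv (Eq.symm ?_)
      have hz0 : ∀ e : Fin m, z e + 0 * v e = z e := fun e => by ring
      have hD0 : Dfun t z v 0 = ∑ e', (Real.exp (z e' / t) + Real.exp (-z e' / t)) := by
        simp only [Dfun]
        exact Finset.sum_congr rfl fun e _ => by rw [hz0]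
      simp only [hz0, hD0]
      simp only [hg, div_mul_eq_mul_div]
      rw [← Finset.sum_div, ← mul_div_assoc, Finset.mul_sum]
      congr 1
      refine Finset.sum_congr rfl fun e _ => ?_
      field_simp
    · -- Lipschitz bound on gradient
      intro z w
      obtain ⟨ε, hε1, hε2⟩ : ∃ ε : Fin m → ℝ, (∀ e, |ε e| ≤ 1) ∧
          ∀ e, ε e * (g z e - g w e) = |g z e - g w e| := by
        refine ⟨fun e => if 0 ≤ g z e - g w e then 1 else -1, fun e => ?_, fun e => ?_⟩
        · dsimp only
          split <;> norm_num
        · dsimp only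
          split
          · rename_i h; rw [one_mul, abs_of_nonneg h]
          · rename_i h; rw [neg_one_mul, abs_of_neg (lt_of_not_ge h)]
      have hu : ∀ e : Fin m, |(z e - w e) / t| ≤ 1 / t * ‖z - w‖ := by
        intro e
        have h1 : |z e - w e| ≤ ‖z - w‖ := by
          simpa [Real.norm_eq_abs] using norm_le_pi_norm (z - w) e
        rw [abs_div, abs_of_pos ht]
        rw [div_le_iff₀ ht]
        calc |z e - w e| ≤ ‖z - w‖ := h1
          _ = 1 / t * ‖z - w‖ * t := by field_simp
      have h1 : Nfun t w (fun e => z e - w e) ε 1 / Dfun t w (fun e => z e - w e) 1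
          = ∑ e, ε e * g z e := by
        have harg : ∀ e : Fin m, w e + 1 * (z e - w e) = z e := fun e => by ring
        simp only [Nfun, Dfun, harg]
        rw [Finset.sum_div]
        exact Finset.sum_congr rfl fun e _ => by rw [hg, mul_div_assoc]
      have h0 : Nfun t w (fun e => z e - w e) ε 0 / Dfun t w (fun e => z e - w e) 0
          = ∑ e, ε e * g w e := by
        have harg : ∀ e : Fin m, w e + 0 * (z e - w e) = w e := fun e => by ring
        simp only [Nfun, Dfun, harg]
        rw [Finset.sum_div]
        exact Finset.sum_congr rfl fun e _ => by rw [hg, mul_div_assoc]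
      calc ∑ e, |g z e - g w e| = ∑ e, (ε e * g z e - ε e * g w e) :=
            Finset.sum_congr rfl fun e _ => by rw [← hε2 e]; ring
        _ = (∑ e, ε e * g z e) - ∑ e, ε e * g w e := Finset.sum_sub_distrib _ _
        _ = Nfun t w (fun e => z e - w e) ε 1 / Dfun t w (fun e => z e - w e) 1 -
            Nfun t w (fun e => z e - w e) ε 0 / Dfun t w (fun e => z e - w e) 0 := by
            rw [h1, h0]
        _ ≤ 1 / t * ‖z - w‖ :=
            lipkey hm ht w (fun e => z e - w e) ε hε1 (1 / t * ‖z - w‖) (by positivity) hu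
end

section
/- Any almost j-tree in which every vertex has degree at least 3 has at most 3j − 2 vertices. -/
open Finset SimpleGraph

/-- A finite acyclic graph on a nonempty vertex set has at most `card V - 1` edges. -/
lemma acyclic_card_edgeFinset_add_one_le {V : Type*} [Fintype V] [DecidableEq V] [Nonempty V]
    (G : SimpleGraph V) [Fintype G.edgeSet] (h : G.IsAcyclic) :
    G.edgeFinset.card + 1 ≤ Fintype.card V := by
  classical
  -- a root in each connected component
  let ρ : V → V := fun v => (G.connectedComponentMk v).out
  have hρmk : ∀ v, G.connectedComponentMk (ρ v) = G.connectedComponentMk v :=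
    fun v => Quot.out_eq _
  have hreach : ∀ v, G.Reachable v (ρ v) :=
    fun v => (ConnectedComponent.exact (hρmk v)).symm
  have hρadj : ∀ {a b}, G.Adj a b → ρ a = ρ b := by
    intro a b hab
    show (G.connectedComponentMk a).out = (G.connectedComponentMk b).out
    rw [ConnectedComponent.connectedComponentMk_eq_of_adj hab]
  -- a chosen path from each vertex to its root
  let P : ∀ v, G.Path v (ρ v) := fun v => (hreach v).some.toPath
  let len : V → ℕ := fun v => (P v).1.length
  have L0 : ∀ (v w : V), ρ v = w → ∀ (q : G.Walk v w), q.IsPath →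
      q.length = len v ∧ q.support = (P v).1.support := by
    intro v w hw q hq
    subst hw
    have hPq : (⟨q, hq⟩ : G.Path v (ρ v)) = P v := h.path_unique _ _
    exact ⟨congrArg (fun p : G.Path v (ρ v) => p.1.length) hPq,
      congrArg (fun p : G.Path v (ρ v) => p.1.support) hPq⟩
  have L1 : ∀ {a b}, G.Adj a b → len b ≤ len a → a ∉ (P b).1.support := by
    intro a b hab hle ha
    have hr : ((P b).1.dropUntil a ha).IsPath := (P b).2.dropUntil ha
    have hlen := (L0 a (ρ b) (hρadj hab) _ hr).1
    have hspec : ((P b).1.takeUntil a ha).append ((P b).1.dropUntil a ha) = (P b).1 :=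
      Walk.take_spec _ ha
    have hlb : ((P b).1.takeUntil a ha).length + ((P b).1.dropUntil a ha).length = len b := by
      have := congrArg Walk.length hspec
      rwa [Walk.length_append] at this
    have ht : ((P b).1.takeUntil a ha).length ≠ 0 := fun h0 =>
      hab.ne' (Walk.eq_of_length_eq_zero h0)
    omega
  have L2 : ∀ {a b}, G.Adj a b → len b ≤ len a →
      len a = len b + 1 ∧ (P a).1.support = a :: (P b).1.support := by
    intro a b hab hle
    have ha := L1 hab hle
    have hW : (Walk.cons hab (P b).1).IsPath := (P b).2.cons ha
    have hL := L0 a (ρ b) (hρadj hab) _ hW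
    constructor
    · have h1 := hL.1
      rw [Walk.length_cons] at h1
      exact h1.symm
    · have := hL.2; simpa [Walk.support_cons] using this.symm
  -- a key function strictly monotone in `len` and injective
  let idx : V → ℕ := fun v => (Fintype.equivFin V v : ℕ)
  let key : V → ℕ := fun v => len v * Fintype.card V + idx v
  have hidx : ∀ v, idx v < Fintype.card V := fun v => (Fintype.equivFin V v).2
  have hkeymono : ∀ {a b}, len a < len b → key a < key b := by
    intro a b hl
    have h1 := hidx a
    have h2 := hidx b
    have h3 : (len a + 1) * Fintype.card V ≤ len b * Fintype.card V :=
      Nat.mul_le_mul_right _ hl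
    have h4 : len a * Fintype.card V + Fintype.card V = (len a + 1) * Fintype.card V := by ring
    show len a * Fintype.card V + idx a < len b * Fintype.card V + idx b
    omega
  have hkeyinj : ∀ {a b : V}, key a = key b → a = b := by
    intro a b hk
    have hl : len a = len b := by
      rcases lt_trichotomy (len a) (len b) with h' | h' | h'
      · exact absurd hk (hkeymono h').ne
      · exact h'
      · exact absurd hk.symm (hkeymono h').ne
    have hidxeq : idx a = idx b := by
      have h5 : len a * Fintype.card V + idx a = len b * Fintype.card V + idx b := hk
      rw [hl] at h5
      omega
    exact (Fintype.equivFin V).injective (Fin.ext hidxeq)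
  -- the map sending each edge to its endpoint farther from the root
  let f : Sym2 V → V := Sym2.lift ⟨fun a b => if key a ≤ key b then b else a, by
    intro a b
    by_cases hab : key a ≤ key b
    · by_cases hba : key b ≤ key a
      · have : a = b := hkeyinj (le_antisymm hab hba)
        subst this; simp
      · simp [hab, hba]
    · have hba : key b ≤ key a := le_of_not_ge hab
      simp [hab, hba]⟩
  have hfspec : ∀ {a b : V}, G.Adj a b → ∃ x y, s(a, b) = s(x, y) ∧ G.Adj x y ∧
      f s(a, b) = x ∧ len x = len y + 1 ∧ (P x).1.support = x :: (P y).1.support := by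
    intro a b hab
    rcases le_total (len a) (len b) with hle | hle
    · obtain ⟨h1, h2⟩ := L2 hab.symm hle
      refine ⟨b, a, Sym2.eq_swap, hab.symm, ?_, h1, h2⟩
      have hk : key a ≤ key b := (hkeymono (by omega)).le
      simp [f, Sym2.lift_mk, hk]
    · obtain ⟨h1, h2⟩ := L2 hab hle
      refine ⟨a, b, rfl, hab, ?_, h1, h2⟩
      have hk : ¬ key a ≤ key b := not_le.mpr (hkeymono (by omega))
      simp [f, Sym2.lift_mk, hk]
  -- a root of length 0
  obtain ⟨v0⟩ := ‹Nonempty V›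
  have hρr : ρ (ρ v0) = ρ v0 := by
    show (G.connectedComponentMk (ρ v0)).out = ρ v0
    rw [hρmk v0]
  have hr0 : len (ρ v0) = 0 := by
    have := (L0 (ρ v0) (ρ v0) hρr Walk.nil Walk.IsPath.nil).1
    simpa using this.symm
  have hmaps : ∀ e ∈ G.edgeFinset, f e ∈ univ.erase (ρ v0) := by
    intro e he
    rw [mem_edgeFinset] at he
    induction e using Sym2.ind with
    | _ a b =>
      rw [mem_edgeSet] at he
      obtain ⟨x, y, hxy, hadj, hfx, hlen, hsupp⟩ := hfspec he
      rw [Finset.mem_erase]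
      refine ⟨?_, mem_univ _⟩
      rw [hfx]
      intro hx
      rw [hx] at hlen
      omega
  have hinj : Set.InjOn f ↑G.edgeFinset := by
    intro e1 he1 e2 he2 hfe
    simp only [Finset.coe_sort_coe, Finset.mem_coe, mem_edgeFinset] at he1 he2
    induction e1 using Sym2.ind with
    | _ a1 b1 =>
      induction e2 using Sym2.ind with
      | _ a2 b2 =>
        rw [mem_edgeSet] at he1 he2
        obtain ⟨x1, y1, hxy1, hadj1, hfx1, hlen1, hsupp1⟩ := hfspec he1
        obtain ⟨x2, y2, hxy2, hadj2, hfx2, hlen2, hsupp2⟩ := hfspec he2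
        have hx : x1 = x2 := by rw [← hfx1, ← hfx2, hfe]
        subst hx
        have hsup : (P y1).1.support = (P y2).1.support := by
          rw [hsupp1] at hsupp2
          simpa using congrArg List.tail hsupp2
        have hy : y1 = y2 := by
          have := congrArg List.head? hsup
          rw [(P y1).1.support_eq_cons, (P y2).1.support_eq_cons] at this
          simp only [List.head?_cons, Option.some.injEq] at this
          exact this
        rw [hxy1, hxy2, hy]
  have hcard := Finset.card_le_card_of_injOn f hmaps hinj
  rw [Finset.card_erase_of_mem (mem_univ _), Finset.card_univ] at hcard
  have hpos : 1 ≤ Fintype.card V := Fintype.card_pos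
  omega

/-- An almost `j`-tree with minimum degree at least 3 has at most `3j - 2` vertices. -/
theorem stmt17 {V : Type*} [Fintype V] [DecidableEq V]
    (G : SimpleGraph V) [DecidableRel G.Adj]
    (j : ℕ) (hj : 1 ≤ j) (J : Finset V) (hJcard : J.card ≤ j)
    (hforest : (G.deleteEdges {e : Sym2 V | ∀ v ∈ e, v ∈ J}).IsAcyclic)
    (hdeg : ∀ v : V, 3 ≤ G.degree v) :
    Fintype.card V ≤ 3 * j - 2 := by
  classical
  by_cases hV : Nonempty V
  · set F := G.deleteEdges {e : Sym2 V | ∀ v ∈ e, v ∈ J} with hF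
    -- vertices outside J keep all their edges
    have hFdeg : ∀ v : V, v ∉ J → 3 ≤ F.degree v := by
      intro v hv
      refine le_trans (hdeg v) (Finset.card_le_card ?_)
      intro w hw
      rw [mem_neighborFinset] at hw ⊢
      rw [hF, SimpleGraph.deleteEdges_adj]
      exact ⟨hw, fun hS => hv (hS v (Sym2.mem_mk_left _ _))⟩
    have hsum : 3 * (Fintype.card V - J.card) ≤ ∑ v : V, F.degree v := by
      calc 3 * (Fintype.card V - J.card) = Jᶜ.card * 3 := by
            rw [Finset.card_compl]; ring
        _ ≤ ∑ v ∈ Jᶜ, F.degree v := Finset.card_nsmul_le_sum _ _ _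
              (fun v hv => hFdeg v (Finset.mem_compl.mp hv))
        _ ≤ ∑ v : V, F.degree v :=
              Finset.sum_le_sum_of_subset (Finset.subset_univ _)
    rw [F.sum_degrees_eq_twice_card_edges] at hsum
    have hedge : F.edgeFinset.card + 1 ≤ Fintype.card V :=
      acyclic_card_edgeFinset_add_one_le F hforest
    omega
  · have : Fintype.card V = 0 := Fintype.card_eq_zero_iff.mpr (not_nonempty_iff.mp hV)
    omega
end
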